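/- Let m ∈ ℂ[X] be monic of degree l ≥ 1 and let p ∈ ℂ[X] have degree l - 1 with no common root with m and with simple roots λ₁, …, λ_{l-1}. Then for every ε > 0 with the closed discs of radius ε around the λⱼ pairwise disjoint and disjoint from the roots of m, there exists τ₀ > 0 such that for all τ ∈ ℂ with |τ| > τ₀, the polynomial (1/τ)m - p has exactly one (simple) root in each disc {|λ - λⱼ| ≤ ε}, j = 1, …, l-1. -/

import Mathlib

open Polynomial Classical

lemma aux_pow_le_prod (ε : ℝ) (hε : 0 ≤ ε) (s : Multiset ℝ)
    (h : ∀ x ∈ s, ε ≤ x) : ε ^ Multiset.card s ≤ s.prod := by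
  induction s using Multiset.induction with
  | empty => simp
  | cons a t ih =>
    have h1 : ε ≤ a := h a (Multiset.mem_cons_self a t)
    have h2 : ε ^ Multiset.card t ≤ t.prod :=
      ih fun x hx => h x (Multiset.mem_cons_of_mem hx)
    have h3 : (0:ℝ) ≤ t.prod := le_trans (pow_nonneg hε _) h2
    simp only [Multiset.card_cons, Multiset.prod_cons, pow_succ]
    nlinarith [pow_nonneg hε (Multiset.card t)]

lemma aux_card_sum {k : ℕ} (f : Fin k → Multiset ℂ) :
    Multiset.card (∑ j, f j) = ∑ j, Multiset.card (f j) :=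
  map_sum (⟨⟨Multiset.card, Multiset.card_zero⟩, Multiset.card_add⟩ : Multiset ℂ →+ ℕ)
    f Finset.univ

lemma aux_sub {k : ℕ} (s : Multiset ℂ) (P : Fin k → ℂ → Prop)
    [∀ j, DecidablePred (P j)]
    (hd : ∀ j j' : Fin k, j ≠ j' → ∀ z, P j z → ¬ P j' z)
    (μ : ℂ) (hμ : μ ∈ s) (hout : ∀ j, ¬ P j μ) :
    μ ::ₘ ∑ j : Fin k, Multiset.filter (P j) s ≤ s := by
  rw [Multiset.le_iff_count]
  intro a
  rw [Multiset.count_cons, Multiset.count_sum']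
  by_cases ha : a = μ
  · subst ha
    have h0 : ∀ j : Fin k, Multiset.count a (Multiset.filter (P j) s) = 0 := by
      intro j
      rw [Multiset.count_filter, if_neg (hout j)]
    rw [Finset.sum_congr rfl fun j _ => h0 j, Finset.sum_const_zero, if_pos rfl, zero_add]
    exact Multiset.one_le_count_iff_mem.mpr hμ
  · rw [if_neg ha, add_zero]
    by_cases hex : ∃ j₀, P j₀ a
    · obtain ⟨j₀, hj₀⟩ := hex
      have heq : ∑ j : Fin k, Multiset.count a (Multiset.filter (P j) s)
          = Multiset.count a s := by
        rw [Finset.sum_eq_single j₀]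
        · rw [Multiset.count_filter, if_pos hj₀]
        · intro b _ hb
          rw [Multiset.count_filter, if_neg]
          exact hd j₀ b (fun h => hb h.symm) a hj₀
        · intro h
          exact absurd (Finset.mem_univ j₀) h
      exact le_of_eq heq
    · push_neg at hex
      have h0 : ∀ j : Fin k, Multiset.count a (Multiset.filter (P j) s) = 0 := by
        intro j
        rw [Multiset.count_filter, if_neg (hex j)]
      rw [Finset.sum_congr rfl fun j _ => h0 j, Finset.sum_const_zero]
      exact Nat.zero_le _

theorem stmt_12 (l : ℕ) (hl : 1 ≤ l) (m p : Polynomial ℂ)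
    (hm : m.Monic) (hml : m.natDegree = l) (hpdeg : p.natDegree = l - 1)
    (r : Fin (l - 1) → ℂ)
    (hroots : p.roots = Multiset.map r Finset.univ.val)
    (hsimple : (Multiset.map r Finset.univ.val).Nodup)
    (ε : ℝ) (hε : 0 < ε)
    (hdisj : ∀ j j' : Fin (l - 1), j ≠ j' →
      Metric.closedBall (r j) ε ∩ Metric.closedBall (r j') ε = ∅)
    (hmfree : ∀ (j : Fin (l - 1)) (z : ℂ), z ∈ Metric.closedBall (r j) ε → ¬m.IsRoot z) :
    ∃ τ₀ > (0 : ℝ), ∀ τ : ℂ, τ₀ < ‖τ‖ → ∀ j : Fin (l - 1),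
      Multiset.card (Multiset.filter (fun z => z ∈ Metric.closedBall (r j) ε)
        ((C τ⁻¹ * m - p).roots)) = 1 := by
  rcases eq_or_lt_of_le hl with h1 | h2
  · exact ⟨1, one_pos, fun τ hτ j => absurd j.2 (by omega)⟩
  -- now 1 < l
  have hp0 : p ≠ 0 := by
    intro h
    rw [h, natDegree_zero] at hpdeg
    omega
  have hple : p.leadingCoeff ≠ 0 := leadingCoeff_ne_zero.mpr hp0
  set c : ℝ := ‖p.leadingCoeff‖ with hc_def
  have hc : 0 < c := norm_pos_iff.mpr hple
  set K : ℝ := ‖m.coeff (l - 1)‖ with hK_def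
  set M : ℝ := 1 + ∑ j : Fin (l-1), ‖m.eval (r j)‖ with hM_def
  have hsumM : (0:ℝ) ≤ ∑ j : Fin (l-1), ‖m.eval (r j)‖ :=
    Finset.sum_nonneg fun i _ => norm_nonneg _
  have hM1 : 1 ≤ M := by rw [hM_def]; linarith
  have hMb : ∀ j, ‖m.eval (r j)‖ ≤ M - 1 := by
    intro j
    rw [hM_def]
    have := Finset.single_le_sum (f := fun j => ‖m.eval (r j)‖)
      (fun i _ => norm_nonneg _) (Finset.mem_univ j)
    simpa using this
  set A : ℝ := 1 + ∑ j : Fin (l-1), ‖r j‖ with hA_def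
  have hsumA : (0:ℝ) ≤ ∑ j : Fin (l-1), ‖r j‖ :=
    Finset.sum_nonneg fun i _ => norm_nonneg _
  have hA1 : 1 ≤ A := by rw [hA_def]; linarith
  have hAb : ∀ j, ‖r j‖ ≤ A - 1 := by
    intro j
    rw [hA_def]
    have := Finset.single_le_sum (f := fun j => ‖r j‖)
      (fun i _ => norm_nonneg _) (Finset.mem_univ j)
    simpa using this
  have hεpow : (0:ℝ) < ε ^ (l-1) := pow_pos hε _
  set G : ℝ := A + ε + M / ε ^ (l-1) + 1 with hG_def
  have hMd : (0:ℝ) < M / ε ^ (l-1) := div_pos (by linarith) hεpow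
  have hG0 : 0 < G := by rw [hG_def]; linarith
  refine ⟨max 1 ((l * (G+1) + K)/c), lt_of_lt_of_le one_pos (le_max_left _ _),
    fun τ hτ => ?_⟩
  have hτ1 : 1 < ‖τ‖ := lt_of_le_of_lt (le_max_left _ _) hτ
  have hτne : τ ≠ 0 := by
    intro h
    rw [h, norm_zero] at hτ1
    linarith
  have hτc : l * (G+1) + K < ‖τ‖ * c := by
    have h := lt_of_le_of_lt (le_max_right 1 ((l * (G+1) + K)/c)) hτ
    rw [div_lt_iff₀ hc] at h
    linarith
  set w := m - C τ * p with hw_def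
  have hCpdeg : (C τ * p).natDegree < m.natDegree := by
    have := natDegree_C_mul_le τ p
    omega
  have hwdeg : w.natDegree = l := by
    rw [hw_def, natDegree_sub_eq_left_of_natDegree_lt hCpdeg, hml]
  have hwm : w.Monic := hm.sub_of_left (degree_lt_degree hCpdeg)
  have hsplits : Splits w := IsAlgClosed.splits w
  have hcard : Multiset.card w.roots = l := by
    rw [← hwdeg]
    exact splits_iff_card_roots.mp hsplits
  -- the sum of the roots is large
  have hplc : p.coeff (l-1) = p.leadingCoeff := by
    rw [← hpdeg]; rfl
  have hwnext : w.nextCoeff = m.coeff (l-1) - τ * p.leadingCoeff := by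
    rw [nextCoeff_of_natDegree_pos (by omega : 0 < w.natDegree), hwdeg]
    rw [hw_def]
    simp [coeff_sub, coeff_C_mul, hplc]
  have hsum : w.nextCoeff = -w.roots.sum :=
    hsplits.nextCoeff_eq_neg_sum_roots_of_monic hwm
  have hsumlb : ‖τ‖ * c - K ≤ ‖w.roots.sum‖ := by
    have h1 : ‖w.roots.sum‖ = ‖τ * p.leadingCoeff - m.coeff (l-1)‖ := by
      have : w.roots.sum = τ * p.leadingCoeff - m.coeff (l-1) := by
        have h := hsum.symm.trans hwnext
        linear_combination -h
      rw [this]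
    rw [h1]
    have h3 : ‖τ * p.leadingCoeff‖ - ‖m.coeff (l-1)‖
        ≤ ‖τ * p.leadingCoeff - m.coeff (l-1)‖ := by
      simpa using
        norm_sub_norm_le (τ * p.leadingCoeff) (m.coeff (l-1))
    rw [norm_mul] at h3
    linarith
  -- there is a big root
  have hbig : ∃ μ ∈ w.roots, G ≤ ‖μ‖ := by
    by_contra hcon
    push_neg at hcon
    have h1 : (w.roots.map (fun x : ℂ => ‖x‖)).sum
        ≤ Multiset.card (w.roots.map (fun x : ℂ => ‖x‖)) • G := by
      apply Multiset.sum_le_card_nsmul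
      intro x hx
      obtain ⟨μ, hμ, rfl⟩ := Multiset.mem_map.mp hx
      exact (hcon μ hμ).le
    have h2 : ‖w.roots.sum‖ ≤ (w.roots.map (fun x : ℂ => ‖x‖)).sum := by
      simpa using norm_multiset_sum_le w.roots
    rw [Multiset.card_map, hcard, nsmul_eq_mul] at h1
    have hlpos : (1:ℝ) ≤ (l:ℝ) := by exact_mod_cast hl
    nlinarith
  obtain ⟨μs, hμmem, hμbig⟩ := hbig
  -- μs lies outside every disc
  have hout : ∀ j : Fin (l-1), μs ∉ Metric.closedBall (r j) ε := by
    intro j hmem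
    rw [Metric.mem_closedBall, Complex.dist_eq] at hmem
    have h1 : ‖μs‖ - ‖r j‖ ≤ ‖μs - r j‖ := by
      simpa using norm_sub_norm_le μs (r j)
    have h2 := hAb j
    rw [hG_def] at hμbig
    linarith
  -- each disc contains at least one root
  have hge1 : ∀ j : Fin (l-1),
      1 ≤ Multiset.card (Multiset.filter
        (fun z => z ∈ Metric.closedBall (r j) ε) w.roots) := by
    intro j
    by_contra hcon
    have h0 : Multiset.filter (fun z => z ∈ Metric.closedBall (r j) ε) w.roots = 0 := by
      rw [← Multiset.card_eq_zero]
      omega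
    have houts : ∀ μ ∈ w.roots, ε < ‖r j - μ‖ := by
      intro μ hμ
      have hnot : μ ∉ Metric.closedBall (r j) ε := by
        intro hmem
        have : μ ∈ Multiset.filter (fun z => z ∈ Metric.closedBall (r j) ε) w.roots :=
          Multiset.mem_filter.mpr ⟨hμ, hmem⟩
        rw [h0] at this
        exact absurd this (Multiset.notMem_zero μ)
      rw [Metric.mem_closedBall, not_le, Complex.dist_eq] at hnot
      calc ε < ‖μ - r j‖ := hnot
      _ = ‖r j - μ‖ := by rw [← norm_neg]; ring_nf
    -- product formula for |w(r j)|
    have hprod : w = (w.roots.map fun a => X - C a).prod :=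
      hsplits.eq_prod_roots_of_monic hwm
    have heval : ‖w.eval (r j)‖
        = (w.roots.map fun a => ‖r j - a‖).prod := by
      conv_lhs => rw [hprod]
      rw [eval_multiset_prod, Multiset.map_map, ← normHom_apply, map_multiset_prod, Multiset.map_map]
      congr 1
      apply Multiset.map_congr rfl
      intro a _
      simp
    -- w(r j) = m(r j)
    have hpr : p.eval (r j) = 0 := by
      have hmemp : r j ∈ p.roots := by
        rw [hroots]
        exact Multiset.mem_map_of_mem r (Finset.mem_univ_val j)
      exact (mem_roots hp0).mp hmemp
    have hwev : w.eval (r j) = m.eval (r j) := by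
      rw [hw_def]
      simp [hpr]
    -- split off the big root
    have hsplit : w.roots = μs ::ₘ w.roots.erase μs := (Multiset.cons_erase hμmem).symm
    have hcerase : Multiset.card (w.roots.erase μs) = l - 1 := by
      rw [Multiset.card_erase_of_mem hμmem, hcard]
      rfl
    have hrest : ε ^ (l-1)
        ≤ ((w.roots.erase μs).map fun a => ‖r j - a‖).prod := by
      have hcard2 : Multiset.card ((w.roots.erase μs).map fun a => ‖r j - a‖)
          = l - 1 := by rw [Multiset.card_map, hcerase]
      rw [← hcard2]
      apply aux_pow_le_prod ε hε.le
      intro x hx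
      obtain ⟨μ, hμ, rfl⟩ := Multiset.mem_map.mp hx
      exact (houts μ (Multiset.mem_of_mem_erase hμ)).le
    have hfirst : G - (A - 1) ≤ ‖r j - μs‖ := by
      have h1 : ‖μs‖ - ‖r j‖ ≤ ‖r j - μs‖ := by
        have := norm_sub_norm_le μs (r j)
        calc ‖μs‖ - ‖r j‖ ≤ ‖μs - r j‖ := this
        _ = ‖r j - μs‖ := by rw [← norm_neg]; ring_nf
      have h2 := hAb j
      linarith
    have htot : ‖w.eval (r j)‖
        = ‖r j - μs‖
          * ((w.roots.erase μs).map fun a => ‖r j - a‖).prod := by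
      rw [heval]
      conv_lhs => rw [hsplit]
      rw [Multiset.map_cons, Multiset.prod_cons]
    have hub : ‖w.eval (r j)‖ ≤ M - 1 := by
      rw [hwev]; exact hMb j
    have hGA : G - (A - 1) = ε + M / ε^(l-1) + 2 := by rw [hG_def]; ring
    have hMe : M / ε^(l-1) * ε^(l-1) = M := div_mul_cancel₀ M (ne_of_gt hεpow)
    have hfpos : (0:ℝ) < G - (A-1) := by rw [hGA]; linarith
    have hmul : (G - (A-1)) * ε^(l-1)
        ≤ ‖r j - μs‖
          * ((w.roots.erase μs).map fun a => ‖r j - a‖).prod :=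
      mul_le_mul hfirst hrest hεpow.le (hfpos.le.trans hfirst)
    have hexp : (G - (A-1)) * ε^(l-1)
        = ε * ε^(l-1) + M / ε^(l-1) * ε^(l-1) + 2 * ε^(l-1) := by
      rw [hGA]; ring
    rw [hexp, hMe] at hmul
    rw [htot] at hub
    nlinarith [mul_pos hε hεpow, hεpow]
  -- counting
  have hd : ∀ j j' : Fin (l-1), j ≠ j' → ∀ z : ℂ,
      z ∈ Metric.closedBall (r j) ε → ¬ z ∈ Metric.closedBall (r j') ε := by
    intro j j' hjj z hz hz'
    have hmem2 : z ∈ Metric.closedBall (r j) ε ∩ Metric.closedBall (r j') ε := ⟨hz, hz'⟩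
    rw [hdisj j j' hjj] at hmem2
    exact hmem2
  have hsub := aux_sub w.roots (fun j z => z ∈ Metric.closedBall (r j) ε) hd μs hμmem hout
  have hcardle := Multiset.card_le_card hsub
  rw [Multiset.card_cons, aux_card_sum, hcard] at hcardle
  have hcardle' : (∑ j : Fin (l-1), Multiset.card (Multiset.filter
      (fun z => z ∈ Metric.closedBall (r j) ε) w.roots)) + 1 ≤ l := hcardle
  have hsumge : (l - 1 : ℕ) ≤ ∑ j : Fin (l-1), Multiset.card (Multiset.filter
      (fun z => z ∈ Metric.closedBall (r j) ε) w.roots) := by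
    calc (l-1:ℕ) = ∑ _j : Fin (l-1), 1 := by simp
    _ ≤ _ := Finset.sum_le_sum fun i _ => hge1 i
  have hkey : ∀ j : Fin (l-1), Multiset.card (Multiset.filter
      (fun z => z ∈ Metric.closedBall (r j) ε) w.roots) = 1 := by
    have heq : ∑ _j : Fin (l-1), (1:ℕ) = ∑ j : Fin (l-1), Multiset.card (Multiset.filter
        (fun z => z ∈ Metric.closedBall (r j) ε) w.roots) := by
      have h1 : ∑ _j : Fin (l-1), (1:ℕ) = l - 1 := by simp
      omega
    have hall := (Finset.sum_eq_sum_iff_of_le (fun i (_ : i ∈ Finset.univ) => hge1 i)).mp heq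
    intro j
    exact (hall j (Finset.mem_univ j)).symm
  intro j
  have hq : C τ⁻¹ * m - p = C τ⁻¹ * w := by
    rw [hw_def, mul_sub, ← mul_assoc, ← C_mul, inv_mul_cancel₀ hτne, C_1, one_mul]
  rw [hq, roots_C_mul _ (inv_ne_zero hτne)]
  exact hkey j
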